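/- Let D be a finite T-period dataset. D is naively Nash rationalizable if and only if it satisfies T-SARP: there is no cyclic sequence k₁,…,k_L with x^{k_l} ≠ x^{k_{l+1}} and x^{k_l} ∈ B^{k_{l+1}}(x^{k_{l+1}}_{−T}), where B(x_{−T}) is the section of B fixing all coordinates except the T-th at x_{−T}. -/

import Mathlib

def maxSet {X : Type} (S : Set X) (pref : X → X → Prop) : Set X :=
  {x | x ∈ S ∧ ∀ y ∈ S, pref x y}

def WeakOrder {X : Type} (pref : X → X → Prop) : Prop :=
  (∀ a b, pref a b ∨ pref b a) ∧ Transitive pref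

/-- The section of a budget `B` fixing the first `n` coordinates at those of `x`. -/
def secUpTo {T : ℕ} {X : Fin T → Type} (B : Set (∀ t, X t)) (x : ∀ t, X t)
    (n : ℕ) : Set (∀ t, X t) :=
  {y ∈ B | ∀ s : Fin T, (s : ℕ) < n → y s = x s}

/-- The section of `B` fixing all coordinates except the `t`-th at those of `x`. -/
def secExcept {T : ℕ} {X : Fin T → Type} (B : Set (∀ t, X t)) (x : ∀ t, X t)
    (t : Fin T) : Set (∀ t, X t) :=
  {y ∈ B | ∀ s : Fin T, s ≠ t → y s = x s}

/-- T-SARP: no cycle with `x^{k_l} ≠ x^{k_{l+1}}` and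
`x^{k_l} ∈ B^{k_{l+1}}(x^{k_{l+1}}_{−T})`. -/
def TSARP {K : Type} {T : ℕ} (hT : 0 < T) {X : Fin T → Type}
    (x : K → ∀ t, X t) (B : K → Set (∀ t, X t)) : Prop :=
  ¬ ∃ (L : ℕ) (k : Fin (L + 1) → K), ∀ l : Fin (L + 1),
      x (k l) ≠ x (k (l + 1)) ∧
      x (k l) ∈ secExcept (B (k (l + 1))) (x (k (l + 1))) ⟨T - 1, by omega⟩

/-- T-period naive Nash rationalizability. -/
def NaiveNashRatT {K : Type} {T : ℕ} (hT : 0 < T) {X : Fin T → Type}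
    (x : K → ∀ t, X t) (B : K → Set (∀ t, X t)) : Prop :=
  ∃ pref : Fin T → ((∀ t, X t) → (∀ t, X t) → Prop),
    (∀ t, WeakOrder (pref t)) ∧
    ∀ k, (∀ t : Fin T, (t : ℕ) + 1 < T →
        x k ∈ maxSet (secExcept (B k) (x k) t) (pref t)) ∧
      maxSet (secUpTo (B k) (x k) (T - 1)) (pref ⟨T - 1, by omega⟩) = {x k}

/-- The two kinds of sections coincide at the last coordinate. -/
lemma sec_eq_aux {T : ℕ} (hT : 0 < T) {X : Fin T → Type} (B : Set (∀ t, X t))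
    (x : ∀ t, X t) :
    secUpTo B x (T - 1) = secExcept B x ⟨T - 1, by omega⟩ := by
  ext y
  simp only [secUpTo, secExcept, Set.mem_setOf_eq]
  constructor
  · rintro ⟨hB, h⟩
    refine ⟨hB, fun s hs => h s ?_⟩
    have hlt := s.isLt
    have hne : (s : ℕ) ≠ T - 1 := fun hc => hs (Fin.ext hc)
    omega
  · rintro ⟨hB, h⟩
    refine ⟨hB, fun s hs => h s ?_⟩
    intro hc
    have : (s : ℕ) = T - 1 := by rw [hc]
    omega

lemma path_of_reflTransGen_aux {α : Type*} {P : α → α → Prop} {a b : α}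
    (h : Relation.ReflTransGen P a b) :
    ∃ (n : ℕ) (g : ℕ → α), g 0 = a ∧ g n = b ∧ ∀ i < n, P (g i) (g (i + 1)) := by
  induction h with
  | refl => exact ⟨0, fun _ => a, rfl, rfl, by omega⟩
  | @tail b c hab hbc ih =>
    obtain ⟨n, g, h0, hn, he⟩ := ih
    refine ⟨n + 1, fun i => if i ≤ n then g i else c, by simp [h0], by simp, ?_⟩
    intro i hi
    by_cases hin : i < n
    · have h1 : i ≤ n := by omega
      have h2 : i + 1 ≤ n := by omega
      simpa [h1, h2] using he i hin
    · have hieq : i = n := by omega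
      subst hieq
      simp [hn, hbc]

lemma cycle_of_transGen_aux {α : Type*} {P : α → α → Prop} {a : α}
    (h : Relation.TransGen P a a) :
    ∃ (L : ℕ) (f : Fin (L + 1) → α), ∀ l : Fin (L + 1), P (f (l + 1)) (f l) := by
  obtain ⟨b, hab, hba⟩ := Relation.TransGen.tail'_iff.mp h
  obtain ⟨n, g, h0, hn, he⟩ := path_of_reflTransGen_aux hab
  -- extend the path with the final edge b → a, so the path g' has n+1 edges, g' 0 = g' (n+1) = a
  set g' : ℕ → α := fun i => if i ≤ n then g i else a with hg'
  have hg'0 : g' 0 = a := by simp [hg', h0]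
  have hg'n1 : g' (n + 1) = a := by simp [hg']
  have he' : ∀ i < n + 1, P (g' i) (g' (i + 1)) := by
    intro i hi
    by_cases hin : i < n
    · have h1 : i ≤ n := by omega
      have h2 : i + 1 ≤ n := by omega
      simpa [hg', h1, h2] using he i hin
    · have hieq : i = n := by omega
      subst hieq
      simpa [hg', hn] using hba
  -- build the cycle by reversing
  refine ⟨n, fun l => g' (n - (l : ℕ)), ?_⟩
  intro l
  show P (g' (n - ((l + 1 : Fin (n + 1)) : ℕ))) (g' (n - (l : ℕ)))
  have hlv := l.isLt
  have hadd : ((l + 1 : Fin (n + 1)) : ℕ) = ((l : ℕ) + 1) % (n + 1) := by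
    simp [Fin.add_def]
  by_cases hl : (l : ℕ) = n
  · have h0' : ((l + 1 : Fin (n + 1)) : ℕ) = 0 := by rw [hadd, hl]; simp
    rw [h0', hl]
    simp only [Nat.sub_zero, Nat.sub_self]
    have := he' n (by omega)
    rw [hg'n1] at this
    rw [hg'0]
    exact this
  · have h1' : ((l + 1 : Fin (n + 1)) : ℕ) = (l : ℕ) + 1 := by
      rw [hadd, Nat.mod_eq_of_lt (by omega)]
    rw [h1']
    have hx : n - (l : ℕ) = (n - ((l : ℕ) + 1)) + 1 := by omega
    rw [hx]
    exact he' _ (by omega)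

open Fin.NatCast in
theorem naive_nash_rationalizable_iff_TSARP
    {K : Type} [Fintype K] {T : ℕ} (hT : 0 < T) {X : Fin T → Type}
    (x : K → ∀ t, X t) (B : K → Set (∀ t, X t)) (hmem : ∀ k, x k ∈ B k) :
    NaiveNashRatT hT x B ↔ TSARP hT x B := by
  constructor
  · rintro ⟨pref, hWO, hmax⟩ ⟨L, k, hcyc⟩
    set p := pref ⟨T - 1, by omega⟩ with hp
    obtain ⟨htot, htrans⟩ := hWO ⟨T - 1, by omega⟩
    have key : ∀ l : Fin (L + 1),
        p (x (k (l + 1))) (x (k l)) ∧ ¬ p (x (k l)) (x (k (l + 1))) := by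
      intro l
      obtain ⟨hne, hmem'⟩ := hcyc l
      have hmx := (hmax (k (l + 1))).2
      rw [sec_eq_aux hT] at hmx
      have hxk : x (k (l + 1)) ∈
          maxSet (secExcept (B (k (l + 1))) (x (k (l + 1))) ⟨T - 1, by omega⟩) p := by
        rw [hmx]; rfl
      refine ⟨hxk.2 _ hmem', fun hcon => ?_⟩
      have hin : x (k l) ∈
          maxSet (secExcept (B (k (l + 1))) (x (k (l + 1))) ⟨T - 1, by omega⟩) p :=
        ⟨hmem', fun y hy => htrans hcon (hxk.2 y hy)⟩
      rw [hmx] at hin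
      exact hne hin
    have chain : ∀ n : ℕ,
        p (x (k ((n + 1 : ℕ) : Fin (L + 1)))) (x (k 0)) ∧
        ¬ p (x (k 0)) (x (k ((n + 1 : ℕ) : Fin (L + 1)))) := by
      intro n
      induction n with
      | zero =>
        have h01 : ((0 + 1 : ℕ) : Fin (L + 1)) = (0 : Fin (L + 1)) + 1 := by
          push_cast; simp
        rw [h01]
        exact key 0
      | succ n ih =>
        have hk := key ((n + 1 : ℕ) : Fin (L + 1))
        have hcast : ((n + 1 : ℕ) : Fin (L + 1)) + 1 = ((n + 1 + 1 : ℕ) : Fin (L + 1)) := by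
          push_cast; ring
        rw [hcast] at hk
        exact ⟨htrans hk.1 ih.1, fun hcon => ih.2 (htrans hcon hk.1)⟩
    have hfin := chain L
    rw [Fin.natCast_self] at hfin
    rcases htot (x (k 0)) (x (k 0)) with h | h
    · exact hfin.2 h
    · exact hfin.2 h
  · intro hts
    classical
    set lastT : Fin T := ⟨T - 1, by omega⟩ with hlastT
    set P : (∀ t, X t) → (∀ t, X t) → Prop := fun a b =>
      ∃ k, a = x k ∧ b ∈ secExcept (B k) (x k) lastT ∧ b ≠ a with hP
    have hanti : ∀ a b, Relation.ReflTransGen P a b → Relation.ReflTransGen P b a → a = b := by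
      intro a b hab hba
      by_contra hne
      have h1 : Relation.TransGen P a b :=
        (Relation.reflTransGen_iff_eq_or_transGen.mp hab).resolve_left (fun h => hne h.symm)
      have h2 : Relation.TransGen P b b := Relation.TransGen.trans_right hba h1
      obtain ⟨L, f, hf⟩ := cycle_of_transGen_aux h2
      refine hts ⟨L, fun l => (hf l).choose, fun l => ?_⟩
      obtain ⟨he1, he2, he3⟩ := (hf l).choose_spec
      obtain ⟨hf1, hf2, hf3⟩ := (hf (l + 1)).choose_spec
      refine ⟨?_, ?_⟩
      · rw [← he1, ← hf1]; exact hf3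
      · rw [← he1]; exact hf2
    haveI hpo : IsPartialOrder (∀ t, X t) (Relation.ReflTransGen P) :=
      { refl := fun a => Relation.ReflTransGen.refl
        trans := fun a b c => Relation.ReflTransGen.trans
        antisymm := hanti }
    obtain ⟨s, hlin, hrs⟩ := extend_partialOrder (Relation.ReflTransGen P)
    have hsrefl : ∀ a, s a a := fun a => hlin.toIsPartialOrder.toIsPreorder.toRefl.refl a
    have hstrans : Transitive s := fun a b c hab hbc =>
      hlin.toIsPartialOrder.toIsPreorder.toIsTrans.trans a b c hab hbc
    have hstot : ∀ a b, s a b ∨ s b a := fun a b => hlin.toTotal.total a b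
    have hsanti : ∀ a b, s a b → s b a → a = b := fun a b hab hba =>
      hlin.toIsPartialOrder.toAntisymm.antisymm a b hab hba
    have hstrict : ∀ a b, P a b → s a b ∧ ¬ s b a := by
      intro a b hab
      have h1 : s a b := hrs a b (Relation.ReflTransGen.single hab)
      refine ⟨h1, fun h2 => ?_⟩
      obtain ⟨k0, hk1, hk2, hk3⟩ := hab
      exact hk3 (hsanti b a h2 h1)
    refine ⟨fun t => if (t : ℕ) = T - 1 then s else fun _ _ => True, ?_, ?_⟩
    · intro t
      by_cases ht : (t : ℕ) = T - 1
      · simp only [ht, if_pos]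
        exact ⟨hstot, hstrans⟩
      · simp only [ht, if_neg, if_false]
        exact ⟨fun a b => Or.inl trivial, fun a b c _ _ => trivial⟩
    · intro k
      constructor
      · intro t ht
        have hne : ¬ ((t : ℕ) = T - 1) := by omega
        simp only [hne, if_false]
        exact ⟨⟨hmem k, fun s' _ => rfl⟩, fun y _ => trivial⟩
      · simp only [if_pos]
        rw [sec_eq_aux hT]
        have hxkin : x k ∈ secExcept (B k) (x k) ⟨T - 1, by omega⟩ :=
          ⟨hmem k, fun s' _ => rfl⟩
        ext y
        simp only [Set.mem_singleton_iff]
        constructor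
        · rintro ⟨hyS, hymax⟩
          by_contra hne
          have hPxy : P (x k) y := ⟨k, rfl, hyS, hne⟩
          exact (hstrict _ _ hPxy).2 (hymax _ hxkin)
        · rintro rfl
          refine ⟨hxkin, fun y hy => ?_⟩
          by_cases hyx : y = x k
          · rw [hyx]; exact hsrefl _
          · exact (hstrict _ _ ⟨k, rfl, hy, hyx⟩).1
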